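/- Consider a homogeneous BNPG on the complete graph with n players and fix k with 0 < k < n such that Δg(k) > Δg(k−1). Then a k-PSNE exists if and only if (1) there is no player i with Δg(k−1) < c_i < Δg(k), and (2) the set I = {i : c_i ≤ Δg(k−1)} has exactly k elements. Moreover, if a k-PSNE exists it is unique, and its set of investing players is exactly I. -/
import Mathlib

/-- Finite difference `Δg(m) = g(m+1) − g(m)`. -/
def Δg (g : ℕ → ℝ) (m : ℕ) : ℝ := g (m + 1) - g m

/-- Number of investing neighbors of player `i` under profile `x` in graph `G`. -/
noncomputable def nInv {V : Type*} (G : SimpleGraph V) (x : V → Bool) (i : V) : ℕ :=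
  {j | G.Adj i j ∧ x j = true}.ncard

/-- Pure-strategy Nash equilibrium of the BNPG on `G` with externalities `g` and costs `c`. -/
def IsPSNE {V : Type*} (G : SimpleGraph V) (g : V → ℕ → ℝ) (c : V → ℝ)
    (x : V → Bool) : Prop :=
  ∀ i, (x i = true → c i ≤ Δg (g i) (nInv G x i)) ∧
       (x i = false → Δg (g i) (nInv G x i) ≤ c i)

lemma nInv_top {n : ℕ} (x : Fin n → Bool) (i : Fin n) :
    nInv (⊤ : SimpleGraph (Fin n)) x i = ({j | x j = true} \ {i}).ncard := by
  unfold nInv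
  congr 1
  ext j
  simp only [Set.mem_setOf_eq, SimpleGraph.top_adj, Set.mem_diff, Set.mem_singleton_iff]
  exact ⟨fun ⟨h1, h2⟩ => ⟨h2, fun e => h1 e.symm⟩, fun ⟨h2, h1⟩ => ⟨fun e => h1 e.symm, h2⟩⟩

lemma nInv_true {n k : ℕ} (x : Fin n → Bool) (i : Fin n)
    (hcard : {j | x j = true}.ncard = k) (hi : x i = true) :
    nInv (⊤ : SimpleGraph (Fin n)) x i = k - 1 := by
  rw [nInv_top, Set.ncard_diff_singleton_of_mem (s := {j | x j = true})
    (show i ∈ {j | x j = true} from hi), hcard]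

lemma nInv_false {n k : ℕ} (x : Fin n → Bool) (i : Fin n)
    (hcard : {j | x j = true}.ncard = k) (hi : x i = false) :
    nInv (⊤ : SimpleGraph (Fin n)) x i = k := by
  rw [nInv_top, Set.diff_singleton_eq_self (by simp [hi]), hcard]

/-- homogeneous BNPG on the complete graph, `0 < k < n`, `Δg(k) > Δg(k−1)`.
A `k`-PSNE exists iff (1) no player `i` has `Δg(k−1) < c_i < Δg(k)` and
(2) `|{i : c_i ≤ Δg(k−1)}| = k`; moreover a `k`-PSNE is unique if it exists, and its set
of investing players is exactly `{i : c_i ≤ Δg(k−1)}`. -/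
theorem stmt5 (n k : ℕ) (hk0 : 0 < k) (hkn : k < n)
    (g : ℕ → ℝ) (hmono : Monotone g) (c : Fin n → ℝ)
    (hΔ : Δg g (k - 1) < Δg g k) :
    ((∃ x : Fin n → Bool,
        IsPSNE (⊤ : SimpleGraph (Fin n)) (fun _ => g) c x ∧ {i | x i = true}.ncard = k) ↔
      ((∀ i : Fin n, ¬ (Δg g (k - 1) < c i ∧ c i < Δg g k)) ∧
       {i : Fin n | c i ≤ Δg g (k - 1)}.ncard = k)) ∧
    (∀ x y : Fin n → Bool,
      IsPSNE (⊤ : SimpleGraph (Fin n)) (fun _ => g) c x → {i | x i = true}.ncard = k →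
      IsPSNE (⊤ : SimpleGraph (Fin n)) (fun _ => g) c y → {i | y i = true}.ncard = k →
      x = y) ∧
    (∀ x : Fin n → Bool,
      IsPSNE (⊤ : SimpleGraph (Fin n)) (fun _ => g) c x → {i | x i = true}.ncard = k →
      {i | x i = true} = {i : Fin n | c i ≤ Δg g (k - 1)}) := by
  have key : ∀ x : Fin n → Bool,
      IsPSNE (⊤ : SimpleGraph (Fin n)) (fun _ => g) c x → {i | x i = true}.ncard = k →
      {i | x i = true} = {i : Fin n | c i ≤ Δg g (k - 1)} := by
    intro x hx hcard
    ext i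
    simp only [Set.mem_setOf_eq]
    constructor
    · intro hi
      have h := (hx i).1 hi
      rwa [nInv_true x i hcard hi] at h
    · intro hci
      by_contra hfalse
      have hf : x i = false := by
        cases h : x i
        · rfl
        · exact absurd h hfalse
      have h := (hx i).2 hf
      rw [nInv_false x i hcard hf] at h
      exact absurd (lt_of_le_of_lt hci hΔ) (not_lt.2 h)
  refine ⟨⟨?_, ?_⟩, ?_, key⟩
  · rintro ⟨x, hx, hcard⟩
    constructor
    · rintro i ⟨h1, h2⟩
      cases hi : x i
      · have h := (hx i).2 hi
        rw [nInv_false x i hcard hi] at h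
        exact absurd h2 (not_lt.2 h)
      · have h := (hx i).1 hi
        rw [nInv_true x i hcard hi] at h
        exact absurd h1 (not_lt.2 h)
    · rw [← key x hx hcard]; exact hcard
  · rintro ⟨hgap, hI⟩
    have hset : {j | (decide (c j ≤ Δg g (k - 1)) : Bool) = true}
        = {j : Fin n | c j ≤ Δg g (k - 1)} := by
      ext j; simp
    refine ⟨fun i => decide (c i ≤ Δg g (k - 1)), fun i => ⟨?_, ?_⟩, by rw [hset, hI]⟩
    · intro hi
      rw [nInv_true _ i (by rw [hset, hI]) hi]
      simpa using hi
    · intro hi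
      rw [nInv_false _ i (by rw [hset, hI]) hi]
      have h1 : ¬ c i ≤ Δg g (k - 1) := by simpa using hi
      have h2 := hgap i
      push_neg at h2
      exact h2 (lt_of_not_ge h1)
  · intro x y hx hcx hy hcy
    have hs := (key x hx hcx).trans (key y hy hcy).symm
    funext i
    have h := Set.ext_iff.mp hs i
    simp only [Set.mem_setOf_eq] at h
    cases hxi : x i <;> cases hyi : y i <;> simp_all
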